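/- The MIQCP epigraph reformulation of K-means clustering is equivalent to the MINLP formulation: with valid big-M constants, the optimal value of minimizing Σ_{j,k} d_{jk} subject to d_{jk} ≥ ‖y_j − m_k‖² − M_j(1 − w_{jk}), d_{jk} ≥ 0, and Σ_k w_{jk} = 1 (with centroids constrained to the bounding box Y) equals the optimal value of minimizing Σ_{j,k} w_{jk}·‖y_j − m_k‖² subject to Σ_k w_{jk} = 1. -/

import Mathlib

private lemma clamp_sq_le (a b ya c : ℝ) (h1 : a ≤ ya) (h2 : ya ≤ b) :
    (ya - max a (min b c)) ^ 2 ≤ (ya - c) ^ 2 := by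
  rcases le_total c a with h | h
  · have hab : a ≤ b := le_trans h1 h2
    rw [min_eq_right (le_trans h hab), max_eq_left h]
    nlinarith
  · rcases le_total b c with h' | h'
    · rw [min_eq_left h', max_eq_right (le_trans h1 h2)]
      nlinarith
    · rw [min_eq_right h', max_eq_right h]

private lemma eucl_norm_sq {n : ℕ} (x : EuclideanSpace ℝ (Fin n)) :
    ‖x‖ ^ 2 = ∑ l, (x l) ^ 2 := by
  rw [EuclideanSpace.norm_eq, Real.sq_sqrt (by positivity)]
  simp [sq_abs]

/-- Equivalence of the MIQCP epigraph reformulation and the MINLP formulation of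
K-means clustering: with valid big-M constants and centroids constrained to the
bounding box of the data, the two optimal values coincide. -/
theorem kmeans_miqcp_eq_minlp
    {J K : Type*} [Fintype J] [Nonempty J] [Fintype K] [Nonempty K] {n : ℕ}
    (y : J → EuclideanSpace ℝ (Fin n))
    (Y : Set (EuclideanSpace ℝ (Fin n)))
    (hY : Y = {χ | ∀ l : Fin n, (⨅ j, y j l) ≤ χ l ∧ χ l ≤ ⨆ j, y j l})
    (M : J → ℝ)
    (hM : ∀ j, M j = sSup {r : ℝ | ∃ χ ∈ Y, r = ‖y j - χ‖ ^ 2}) :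
    sInf {v : ℝ | ∃ (w : J → K → ℝ) (m : K → EuclideanSpace ℝ (Fin n))
            (d : J → K → ℝ),
          (∀ j k, w j k ∈ ({0, 1} : Set ℝ)) ∧
          (∀ j, ∑ k, w j k = 1) ∧
          (∀ k, m k ∈ Y) ∧
          (∀ j k, d j k ≥ ‖y j - m k‖ ^ 2 - M j * (1 - w j k)) ∧
          (∀ j k, d j k ≥ 0) ∧
          v = ∑ j, ∑ k, d j k}
      =
    sInf {v : ℝ | ∃ (w : J → K → ℝ) (m : K → EuclideanSpace ℝ (Fin n)),
          (∀ j k, w j k ∈ ({0, 1} : Set ℝ)) ∧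
          (∀ j, ∑ k, w j k = 1) ∧
          v = ∑ j, ∑ k, w j k * ‖y j - m k‖ ^ 2} := by
  classical
  set a : Fin n → ℝ := fun l => ⨅ j, y j l with ha
  set b : Fin n → ℝ := fun l => ⨆ j, y j l with hb
  -- each data point lies in Y
  have hyY : ∀ j, y j ∈ Y := by
    intro j
    rw [hY]
    intro l
    exact ⟨ciInf_le (Finite.bddBelow_range _) j,
      le_ciSup (f := fun j => y j l) (Finite.bddAbove_range _) j⟩
  -- coordinates of points in Y are boxed
  have hbox : ∀ χ ∈ Y, ∀ l, a l ≤ χ l ∧ χ l ≤ b l := by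
    intro χ hχ l
    rw [hY] at hχ
    exact hχ l
  -- bound on squared distances for χ ∈ Y
  have hbdd : ∀ j, ∀ χ ∈ Y, ‖y j - χ‖ ^ 2 ≤ ∑ l, (b l - a l) ^ 2 := by
    intro j χ hχ
    rw [eucl_norm_sq]
    apply Finset.sum_le_sum
    intro l _
    have h1 := hbox χ hχ l
    have h2 := hbox (y j) (hyY j) l
    have : (y j - χ) l = y j l - χ l := rfl
    rw [this]
    nlinarith [h1.1, h1.2, h2.1, h2.2]
  have hbddAbove : ∀ j, BddAbove {r : ℝ | ∃ χ ∈ Y, r = ‖y j - χ‖ ^ 2} := by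
    intro j
    refine ⟨∑ l, (b l - a l) ^ 2, ?_⟩
    rintro r ⟨χ, hχ, rfl⟩
    exact hbdd j χ hχ
  have hMle : ∀ j, ∀ χ ∈ Y, ‖y j - χ‖ ^ 2 ≤ M j := by
    intro j χ hχ
    rw [hM]
    exact le_csSup (hbddAbove j) ⟨χ, hχ, rfl⟩
  have hM0 : ∀ j, 0 ≤ M j := by
    intro j
    calc (0 : ℝ) ≤ ‖y j - y j‖ ^ 2 := by positivity
    _ ≤ M j := hMle j (y j) (hyY j)
  set A := {v : ℝ | ∃ (w : J → K → ℝ) (m : K → EuclideanSpace ℝ (Fin n))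
            (d : J → K → ℝ),
          (∀ j k, w j k ∈ ({0, 1} : Set ℝ)) ∧
          (∀ j, ∑ k, w j k = 1) ∧
          (∀ k, m k ∈ Y) ∧
          (∀ j k, d j k ≥ ‖y j - m k‖ ^ 2 - M j * (1 - w j k)) ∧
          (∀ j k, d j k ≥ 0) ∧
          v = ∑ j, ∑ k, d j k} with hA
  set B := {v : ℝ | ∃ (w : J → K → ℝ) (m : K → EuclideanSpace ℝ (Fin n)),
          (∀ j k, w j k ∈ ({0, 1} : Set ℝ)) ∧
          (∀ j, ∑ k, w j k = 1) ∧
          v = ∑ j, ∑ k, w j k * ‖y j - m k‖ ^ 2} with hB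
  -- canonical feasible point
  obtain ⟨k0⟩ := ‹Nonempty K›
  obtain ⟨j0⟩ := ‹Nonempty J›
  set w0 : J → K → ℝ := fun _ k => if k = k0 then 1 else 0 with hw0
  have hw0mem : ∀ j k, w0 j k ∈ ({0, 1} : Set ℝ) := by
    intro j k; by_cases h : k = k0 <;> simp [hw0, h]
  have hw0sum : ∀ j, ∑ k, w0 j k = 1 := by
    intro j; simp [hw0]
  have hAne : A.Nonempty := by
    refine ⟨∑ j, ∑ k, ‖y j - y j0‖ ^ 2, w0, fun _ => y j0,
      fun j k => ‖y j - y j0‖ ^ 2, hw0mem, hw0sum, fun _ => hyY j0, ?_, ?_, rfl⟩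
    · intro j k
      have h0 : w0 j k = 0 ∨ w0 j k = 1 := by simpa using hw0mem j k
      have h1 : 0 ≤ M j * (1 - w0 j k) := by
        rcases h0 with h | h <;> rw [h] <;> nlinarith [hM0 j]
      simp only [ge_iff_le]
      linarith
    · intro j k; dsimp only; positivity
  have hBne : B.Nonempty := by
    exact ⟨∑ j, ∑ k, w0 j k * ‖y j - y j0‖ ^ 2, w0, fun _ => y j0,
      hw0mem, hw0sum, rfl⟩
  have hAbdd : BddBelow A := by
    refine ⟨0, ?_⟩
    rintro v ⟨w, m, d, _, _, _, _, hd0, rfl⟩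
    exact Finset.sum_nonneg fun j _ => Finset.sum_nonneg fun k _ => hd0 j k
  have hBbdd : BddBelow B := by
    refine ⟨0, ?_⟩
    rintro v ⟨w, m, hw, _, rfl⟩
    refine Finset.sum_nonneg fun j _ => Finset.sum_nonneg fun k _ => ?_
    rcases hw j k with h | h <;> rw [h] <;> positivity
  apply le_antisymm
  · -- sInf A ≤ sInf B
    apply le_csInf hBne
    rintro v ⟨w, m, hw, hwsum, rfl⟩
    -- clamp the centroids into Y
    set m' : K → EuclideanSpace ℝ (Fin n) :=
      fun k => WithLp.toLp 2 (fun l => max (a l) (min (b l) (m k l)) : Fin n → ℝ) with hm'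
    have hm'Y : ∀ k, m' k ∈ Y := by
      intro k
      rw [hY]
      intro l
      constructor
      · exact le_max_left _ _
      · have hab : a l ≤ b l := le_trans (hbox (y j0) (hyY j0) l).1
          (hbox (y j0) (hyY j0) l).2
        exact max_le hab (min_le_left _ _)
    have hle : ∀ j k, ‖y j - m' k‖ ^ 2 ≤ ‖y j - m k‖ ^ 2 := by
      intro j k
      rw [eucl_norm_sq, eucl_norm_sq]
      apply Finset.sum_le_sum
      intro l _
      have h2 := hbox (y j) (hyY j) l
      have e1 : (y j - m' k) l = y j l - max (a l) (min (b l) (m k l)) := rfl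
      have e2 : (y j - m k) l = y j l - m k l := rfl
      rw [e1, e2]
      exact clamp_sq_le _ _ _ _ h2.1 h2.2
    have hAmem : (∑ j, ∑ k, w j k * ‖y j - m' k‖ ^ 2) ∈ A := by
      refine ⟨w, m', fun j k => w j k * ‖y j - m' k‖ ^ 2, hw, hwsum, hm'Y, ?_, ?_, rfl⟩
      · intro j k
        have h0 : w j k = 0 ∨ w j k = 1 := by simpa using hw j k
        simp only [ge_iff_le]
        rcases h0 with h | h <;> rw [h]
        · have := hMle j (m' k) (hm'Y k)
          nlinarith
        · nlinarith [sq_nonneg ‖y j - m' k‖]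
      · intro j k
        have h0 : w j k = 0 ∨ w j k = 1 := by simpa using hw j k
        dsimp only
        rcases h0 with h | h <;> rw [h] <;> positivity
    calc sInf A ≤ ∑ j, ∑ k, w j k * ‖y j - m' k‖ ^ 2 := csInf_le hAbdd hAmem
      _ ≤ ∑ j, ∑ k, w j k * ‖y j - m k‖ ^ 2 := by
          refine Finset.sum_le_sum fun j _ => Finset.sum_le_sum fun k _ => ?_
          have h0 : w j k = 0 ∨ w j k = 1 := by simpa using hw j k
          rcases h0 with h | h
          · rw [h]; simp
          · rw [h]; simpa using hle j k
  · -- sInf B ≤ sInf A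
    apply le_csInf hAne
    rintro v ⟨w, m, d, hw, hwsum, hmY, hdge, hd0, rfl⟩
    have hBmem : (∑ j, ∑ k, w j k * ‖y j - m k‖ ^ 2) ∈ B :=
      ⟨w, m, hw, hwsum, rfl⟩
    calc sInf B ≤ ∑ j, ∑ k, w j k * ‖y j - m k‖ ^ 2 := csInf_le hBbdd hBmem
      _ ≤ ∑ j, ∑ k, d j k := by
          refine Finset.sum_le_sum fun j _ => Finset.sum_le_sum fun k _ => ?_
          have h0 : w j k = 0 ∨ w j k = 1 := by simpa using hw j k
          rcases h0 with h | h
          · rw [h]; simpa using hd0 j k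
          · rw [h]
            have := hdge j k
            rw [h] at this
            simpa using this
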